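/- arXiv:1611.04656 — 2 statements merged into one kernel-verified Lean document; each statement's English description precedes it below -/
import Mathlib

section
/- Let k ≥ 1 be an integer, let ξ ∈ ℝᵏ, let R > 0, and let ψ : ℝᵏ → ℝ be a nonnegative C¹ function whose support is compact and contained in the open ball B(ξ,R). Then k² · ∫_{ℝᵏ} ψ(x)² dx ≤ 4R² · ∫_{ℝᵏ} ‖∇ψ(x)‖² dx. In particular, the Rayleigh quotient of any such test function is at least k²/D² where D = 2R is the diameter of the ball. -/
open MeasureTheory Metric Real

section Aux

local notation "⟪" x ", " y "⟫" => @inner ℝ _ _ x y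

/-- Integration by parts step: for each coordinate direction,
`∫ ψ² = -∫ ∂ᵢ(ψ²) (xᵢ - ξᵢ)`. -/
theorem aux_ibp (k : ℕ) (ξ : EuclideanSpace ℝ (Fin k))
    (ψ : EuclideanSpace ℝ (Fin k) → ℝ) (hψ : ContDiff ℝ 1 ψ)
    (hsupp : HasCompactSupport ψ) (i : Fin k) :
    ∫ x : EuclideanSpace ℝ (Fin k), ψ x * ψ x
      = - ∫ x : EuclideanSpace ℝ (Fin k),
          fderiv ℝ (fun y => ψ y * ψ y) x (EuclideanSpace.single i 1) * (x i - ξ i) := by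
  set f : EuclideanSpace ℝ (Fin k) → ℝ := fun y => ψ y * ψ y with hfdef
  set g : EuclideanSpace ℝ (Fin k) → ℝ := fun y => y i - ξ i with hgdef
  have hψd : Differentiable ℝ ψ := hψ.differentiable one_ne_zero
  have hfd : Differentiable ℝ f := hψd.mul hψd
  have hfC : ContDiff ℝ 1 f := hψ.mul hψ
  have hfsupp : HasCompactSupport f := hsupp.mul_right
  have hgd : Differentiable ℝ g :=
    (EuclideanSpace.proj (𝕜 := ℝ) i).differentiable.sub_const (ξ i)
  have hgderiv : ∀ x, fderiv ℝ g x = EuclideanSpace.proj (𝕜 := ℝ) i := by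
    intro x
    rw [hgdef]
    rw [fderiv_sub_const]
    exact (EuclideanSpace.proj (𝕜 := ℝ) i).fderiv
  have hgcont : Continuous g := ((EuclideanSpace.proj (𝕜 := ℝ) i).continuous.sub
    continuous_const)
  have hdfcont : Continuous (fun x => fderiv ℝ f x (EuclideanSpace.single i 1)) :=
    (hfC.continuous_fderiv one_ne_zero).clm_apply continuous_const
  have hdfsupp : HasCompactSupport (fun x => fderiv ℝ f x (EuclideanSpace.single i 1)) :=
    hfsupp.fderiv_apply ℝ _
  have hf'g : Integrable (fun x => fderiv ℝ f x (EuclideanSpace.single i 1) * g x) :=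
    (hdfcont.mul hgcont).integrable_of_hasCompactSupport hdfsupp.mul_right
  have hfg : Integrable (fun x => f x * g x) :=
    ((hψ.continuous.mul hψ.continuous).mul hgcont).integrable_of_hasCompactSupport
      hfsupp.mul_right
  have hfg' : Integrable (fun x => f x * fderiv ℝ g x (EuclideanSpace.single i 1)) := by
    have : (fun x => f x * fderiv ℝ g x (EuclideanSpace.single i 1)) = f := by
      funext x
      simp [hgderiv x, PiLp.proj_apply, EuclideanSpace.single_apply]
    rw [this]
    exact (hψ.continuous.mul hψ.continuous).integrable_of_hasCompactSupport hfsupp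
  have key := integral_mul_fderiv_eq_neg_fderiv_mul_of_integrable
    (f := f) (g := g) (v := EuclideanSpace.single i 1) hf'g hfg' hfg (fun x _ => hfd x) (fun x _ => hgd x)
  calc ∫ x : EuclideanSpace ℝ (Fin k), f x
      = ∫ x : EuclideanSpace ℝ (Fin k), f x * fderiv ℝ g x (EuclideanSpace.single i 1) := by
        congr 1
        funext x
        simp [hgderiv x, PiLp.proj_apply, EuclideanSpace.single_apply]
    _ = - ∫ x : EuclideanSpace ℝ (Fin k), fderiv ℝ f x (EuclideanSpace.single i 1) * g x :=
        key

end Aux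

/-- Flat case of the paper's Poincaré-type inequality underlying the eigenvalue estimate
`λ₁(M) ≥ (k²/D²)(1 − (D/k) sup|H|)` (Theorem `est-first-eigenv`): for a nonnegative `C¹`
function compactly supported in the open ball `B(ξ,R)` of `ℝᵏ`,
`k² ∫ ψ² ≤ 4R² ∫ ‖∇ψ‖²`. -/
theorem eigenvalue_flat (k : ℕ) (hk : 1 ≤ k) (ξ : EuclideanSpace ℝ (Fin k))
    (R : ℝ) (hR : 0 < R) (ψ : EuclideanSpace ℝ (Fin k) → ℝ) (hψ : ContDiff ℝ 1 ψ)
    (hsupp : HasCompactSupport ψ) (hsupp' : tsupport ψ ⊆ ball ξ R)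
    (hpos : ∀ x, 0 ≤ ψ x) :
    (k : ℝ) ^ 2 * ∫ x : EuclideanSpace ℝ (Fin k), ψ x ^ 2
      ≤ 4 * R ^ 2 * ∫ x : EuclideanSpace ℝ (Fin k), ‖gradient ψ x‖ ^ 2 := by
  classical
  have hk1 : (1 : ℝ) ≤ (k : ℝ) := by exact_mod_cast hk
  have hk0 : (0 : ℝ) < (k : ℝ) := lt_of_lt_of_le one_pos hk1
  have hψd : Differentiable ℝ ψ := hψ.differentiable one_ne_zero
  set f : EuclideanSpace ℝ (Fin k) → ℝ := fun y => ψ y * ψ y with hfdef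
  have hfd : Differentiable ℝ f := hψd.mul hψd
  have hfC : ContDiff ℝ 1 f := hψ.mul hψ
  have hfsupp : HasCompactSupport f := hsupp.mul_right
  -- gradient facts
  have hgradnorm : ∀ x, ‖gradient ψ x‖ = ‖fderiv ℝ ψ x‖ := fun x =>
    LinearIsometryEquiv.norm_map _ _
  have hgradinner : ∀ (x v : EuclideanSpace ℝ (Fin k)),
      fderiv ℝ ψ x v = @inner ℝ _ _ (gradient ψ x) v := fun x v =>
    (InnerProductSpace.toDual_symm_apply).symm
  -- derivative of f
  have hfderiv : ∀ x v, fderiv ℝ f x v = 2 * ψ x * fderiv ℝ ψ x v := by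
    intro x v
    have := fderiv_fun_mul (𝕜 := ℝ) (hψd x) (hψd x)
    rw [hfdef]
    rw [this]
    simp
    ring
  -- integrability facts
  have hψ2int : Integrable f :=
    (hψ.continuous.mul hψ.continuous).integrable_of_hasCompactSupport hfsupp
  have hgradint : Integrable (fun x => ‖gradient ψ x‖ ^ 2) := by
    apply Continuous.integrable_of_hasCompactSupport
    · have : Continuous (gradient ψ) :=
        (InnerProductSpace.toDual ℝ _).symm.continuous.comp (hψ.continuous_fderiv one_ne_zero)
      exact (this.norm).pow 2
    · exact (hsupp.fderiv ℝ).comp_left (g := fun L =>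
        ‖(InnerProductSpace.toDual ℝ (EuclideanSpace ℝ (Fin k))).symm L‖ ^ 2) (by simp)
  have hterm_int : ∀ i : Fin k, Integrable (fun x : EuclideanSpace ℝ (Fin k) =>
      fderiv ℝ f x (EuclideanSpace.single i 1) * (x i - ξ i)) := by
    intro i
    have hdfcont : Continuous (fun x => fderiv ℝ f x (EuclideanSpace.single i 1)) :=
      (hfC.continuous_fderiv one_ne_zero).clm_apply continuous_const
    have hgcont : Continuous (fun x : EuclideanSpace ℝ (Fin k) => x i - ξ i) :=
      ((EuclideanSpace.proj (𝕜 := ℝ) i).continuous.sub continuous_const)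
    exact (hdfcont.mul hgcont).integrable_of_hasCompactSupport
      ((hfsupp.fderiv_apply ℝ _).mul_right)
  -- the key identity: k ∫ ψ² = - ∫ fderiv f x (x - ξ)
  have expand : ∀ x : EuclideanSpace ℝ (Fin k),
      fderiv ℝ f x (x - ξ)
        = ∑ i : Fin k, fderiv ℝ f x (EuclideanSpace.single i 1) * ((x - ξ) i) := by
    intro x
    have hx : (x - ξ) = ∑ i : Fin k, ((x - ξ) i) • EuclideanSpace.single i (1 : ℝ) := by
      have := (EuclideanSpace.basisFun (Fin k) ℝ).sum_repr (x - ξ)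
      simpa [EuclideanSpace.basisFun_apply, EuclideanSpace.basisFun_repr] using this.symm
    calc fderiv ℝ f x (x - ξ)
        = fderiv ℝ f x (∑ i : Fin k, ((x - ξ) i) • EuclideanSpace.single i (1 : ℝ)) := by
          rw [← hx]
      _ = ∑ i : Fin k, fderiv ℝ f x (EuclideanSpace.single i 1) * ((x - ξ) i) := by
          rw [map_sum]
          refine Finset.sum_congr rfl fun i _ => ?_
          simp [mul_comm]
  have keysum : (k : ℝ) * ∫ x : EuclideanSpace ℝ (Fin k), f x
      = - ∫ x : EuclideanSpace ℝ (Fin k), fderiv ℝ f x (x - ξ) := by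
    have h1 : ∫ x : EuclideanSpace ℝ (Fin k), fderiv ℝ f x (x - ξ)
        = ∑ i : Fin k, ∫ x : EuclideanSpace ℝ (Fin k),
            fderiv ℝ f x (EuclideanSpace.single i 1) * (x i - ξ i) := by
      rw [← integral_finset_sum _ (fun i _ => hterm_int i)]
      congr 1
      funext x
      rw [expand x]
      rfl
    have h2 : ∀ i : Fin k, ∫ x : EuclideanSpace ℝ (Fin k),
        fderiv ℝ f x (EuclideanSpace.single i 1) * (x i - ξ i)
          = - ∫ x : EuclideanSpace ℝ (Fin k), f x := by
      intro i
      have h := aux_ibp k ξ ψ hψ hsupp i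
      rw [hfdef]
      linarith [h]
    rw [h1]
    rw [Finset.sum_congr rfl fun i _ => h2 i]
    simp [Finset.sum_const, mul_comm]
  -- pointwise bound
  have hbound : ∀ x : EuclideanSpace ℝ (Fin k),
      - fderiv ℝ f x (x - ξ)
        ≤ (k : ℝ) / 2 * f x + 2 * R ^ 2 / (k : ℝ) * ‖gradient ψ x‖ ^ 2 := by
    intro x
    have hrhs : 0 ≤ (k : ℝ) / 2 * f x + 2 * R ^ 2 / (k : ℝ) * ‖gradient ψ x‖ ^ 2 := by
      have h1 : 0 ≤ f x := mul_self_nonneg _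
      have h2 : 0 ≤ ‖gradient ψ x‖ ^ 2 := sq_nonneg _
      positivity
    by_cases hx : x ∈ closedBall ξ R
    · have hdist : ‖x - ξ‖ ≤ R := by
        rw [← dist_eq_norm]
        exact mem_closedBall.mp hx
      have hinner : - @inner ℝ _ _ (gradient ψ x) (x - ξ) ≤ ‖gradient ψ x‖ * R := by
        calc - @inner ℝ _ _ (gradient ψ x) (x - ξ)
            ≤ ‖gradient ψ x‖ * ‖x - ξ‖ := by
              have := abs_real_inner_le_norm (gradient ψ x) (x - ξ)
              have h := neg_le_of_abs_le this
              linarith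
          _ ≤ ‖gradient ψ x‖ * R := by
              exact mul_le_mul_of_nonneg_left hdist (norm_nonneg _)
      have hψx : 0 ≤ ψ x := hpos x
      have heq : - fderiv ℝ f x (x - ξ)
          = 2 * ψ x * (- @inner ℝ _ _ (gradient ψ x) (x - ξ)) := by
        rw [hfderiv x (x - ξ), hgradinner x (x - ξ)]
        ring
      rw [heq]
      have step : 2 * ψ x * (- @inner ℝ _ _ (gradient ψ x) (x - ξ))
          ≤ 2 * ψ x * (‖gradient ψ x‖ * R) := by
        apply mul_le_mul_of_nonneg_left hinner
        linarith
      refine le_trans step ?_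
      have hfx : f x = ψ x * ψ x := rfl
      rw [hfx]
      have hkne : (k : ℝ) ≠ 0 := ne_of_gt hk0
      have hident : (k : ℝ) / 2 * (ψ x * ψ x) + 2 * R ^ 2 / (k : ℝ) * ‖gradient ψ x‖ ^ 2
          - 2 * ψ x * (‖gradient ψ x‖ * R)
          = ((k : ℝ) * ψ x - 2 * R * ‖gradient ψ x‖) ^ 2 / (2 * (k : ℝ)) := by
        field_simp
        ring
      have hnn : 0 ≤ ((k : ℝ) * ψ x - 2 * R * ‖gradient ψ x‖) ^ 2 / (2 * (k : ℝ)) :=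
        div_nonneg (sq_nonneg _) (by positivity)
      linarith
    · have hxψ : ψ x = 0 := by
        apply image_eq_zero_of_notMem_tsupport
        intro hmem
        exact hx (ball_subset_closedBall (hsupp' hmem))
      have : fderiv ℝ f x (x - ξ) = 0 := by
        rw [hfderiv x (x - ξ), hxψ]
        ring
      rw [this]
      simpa using hrhs
  -- integrate the bound
  have hlhs_int : Integrable (fun x : EuclideanSpace ℝ (Fin k) =>
      - fderiv ℝ f x (x - ξ)) := by
    apply Integrable.neg
    have : (fun x : EuclideanSpace ℝ (Fin k) => fderiv ℝ f x (x - ξ))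
        = fun x => ∑ i : Fin k, fderiv ℝ f x (EuclideanSpace.single i 1) * (x i - ξ i) := by
      funext x
      rw [expand x]
      rfl
    rw [this]
    exact integrable_finset_sum _ (fun i _ => hterm_int i)
  have hrhs_int : Integrable (fun x : EuclideanSpace ℝ (Fin k) =>
      (k : ℝ) / 2 * f x + 2 * R ^ 2 / (k : ℝ) * ‖gradient ψ x‖ ^ 2) :=
    (hψ2int.const_mul _).add (hgradint.const_mul _)
  have hmono : ∫ x : EuclideanSpace ℝ (Fin k), - fderiv ℝ f x (x - ξ)
      ≤ ∫ x : EuclideanSpace ℝ (Fin k),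
          ((k : ℝ) / 2 * f x + 2 * R ^ 2 / (k : ℝ) * ‖gradient ψ x‖ ^ 2) :=
    integral_mono hlhs_int hrhs_int hbound
  have hsplit : ∫ x : EuclideanSpace ℝ (Fin k),
      ((k : ℝ) / 2 * f x + 2 * R ^ 2 / (k : ℝ) * ‖gradient ψ x‖ ^ 2)
        = (k : ℝ) / 2 * (∫ x : EuclideanSpace ℝ (Fin k), f x)
          + 2 * R ^ 2 / (k : ℝ) * ∫ x : EuclideanSpace ℝ (Fin k), ‖gradient ψ x‖ ^ 2 := by
    rw [integral_add (hψ2int.const_mul _) (hgradint.const_mul _),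
      integral_const_mul, integral_const_mul]
  -- put things together
  set A := ∫ x : EuclideanSpace ℝ (Fin k), f x with hA
  set C := ∫ x : EuclideanSpace ℝ (Fin k), ‖gradient ψ x‖ ^ 2 with hC
  have hAnn : 0 ≤ A := integral_nonneg fun x => mul_self_nonneg _
  have hmain : (k : ℝ) * A ≤ (k : ℝ) / 2 * A + 2 * R ^ 2 / (k : ℝ) * C := by
    rw [keysum, ← integral_neg]
    exact hmono.trans_eq hsplit
  have hgoal : (k : ℝ) ^ 2 * A ≤ 4 * R ^ 2 * C := by
    have h2 : (k : ℝ) / 2 * A ≤ 2 * R ^ 2 / (k : ℝ) * C := by linarith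
    have h3 := mul_le_mul_of_nonneg_left h2 (le_of_lt (mul_pos two_pos hk0))
    have hkne : (k : ℝ) ≠ 0 := ne_of_gt hk0
    calc (k : ℝ) ^ 2 * A = 2 * (k : ℝ) * ((k : ℝ) / 2 * A) := by field_simp
      _ ≤ 2 * (k : ℝ) * (2 * R ^ 2 / (k : ℝ) * C) := h3
      _ = 4 * R ^ 2 * C := by field_simp; ring
  have hfin : ∫ x : EuclideanSpace ℝ (Fin k), ψ x ^ 2 = A := by
    rw [hA]
    congr 1
    funext x
    rw [hfdef]
    ring
  rw [hfin]
  exact hgoal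
end

section
/- Let p > 1, k, and γ be real numbers with γ < k and 2 − (p−1)(k−2) < γ, set q = p/(p−1) and E = ((k−γ)/p)·(γ−2+(p−1)(k−2)) (so E > 0). Then for all σ > 0 and ε > 0 one has (σ^p/p^{p−1})·[ (γ−2)(k−γ) − σ^q/q + (2(p−1)/p)·ε²·(k−γ−ε²/2) ] ≤ E^p/p^p, and equality holds if and only if ε² = k−γ and σ^q = E. -/
open Real

/-- Bernoulli-type key lemma: for `u > 0`, `p > 1`,
`p·u^(p-1) ≤ 1 + (p-1)·u^p` with equality iff `u = 1`. -/
lemma rellich_bern (p : ℝ) (hp : 1 < p) (u : ℝ) (hu : 0 < u) :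
    p * u ^ (p - 1) ≤ 1 + (p - 1) * u ^ p ∧
    (p * u ^ (p - 1) = 1 + (p - 1) * u ^ p ↔ u = 1) := by
  have hp0 : (0:ℝ) < p - 1 := by linarith
  have hw : 0 < u ^ (p - 1) := Real.rpow_pos_of_pos hu _
  have hq1 : 1 < p / (p - 1) := by rw [lt_div_iff₀ hp0]; linarith
  have hz : (-1:ℝ) ≤ u ^ (p - 1) - 1 := by linarith
  have hwq : (1 + (u ^ (p - 1) - 1)) ^ (p / (p - 1)) = u ^ p := by
    rw [show (1:ℝ) + (u ^ (p - 1) - 1) = u ^ (p - 1) by ring, ← Real.rpow_mul hu.le]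
    congr 1
    field_simp
  have h3 : p / (p - 1) * (p - 1) = p := by field_simp
  constructor
  · have h1 : 1 + (p / (p - 1)) * (u ^ (p - 1) - 1) ≤ u ^ p :=
      hwq ▸ one_add_mul_self_le_rpow_one_add hz hq1.le
    have h2 := mul_le_mul_of_nonneg_right h1 hp0.le
    nlinarith
  · constructor
    · intro heq
      by_contra hne
      have hw1 : u ^ (p - 1) ≠ 1 := by
        rcases lt_trichotomy u 1 with h | h | h
        · exact ne_of_lt (Real.rpow_lt_one hu.le h hp0)
        · exact absurd h hne
        · exact ne_of_gt (Real.one_lt_rpow h hp0)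
      have h1 : 1 + (p / (p - 1)) * (u ^ (p - 1) - 1) < u ^ p := by
        rw [← hwq]
        exact one_add_mul_self_lt_rpow_one_add hz (by intro h; exact hw1 (by linarith)) hq1
      have h2 := mul_lt_mul_of_pos_right h1 hp0
      nlinarith
    · rintro rfl
      rw [Real.one_rpow, Real.one_rpow]; ring

/-- Scaled form: `p·s^(p-1)·e ≤ e^p + (p-1)·s^p`, equality iff `s = e`. -/
lemma rellich_key (p : ℝ) (hp : 1 < p) (s e : ℝ) (hs : 0 < s) (he : 0 < e) :
    p * s ^ (p - 1) * e ≤ e ^ p + (p - 1) * s ^ p ∧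
    (p * s ^ (p - 1) * e = e ^ p + (p - 1) * s ^ p ↔ s = e) := by
  have hu : 0 < s / e := by positivity
  obtain ⟨hb, hbe⟩ := rellich_bern p hp (s / e) hu
  have hep : 0 < e ^ p := Real.rpow_pos_of_pos he _
  have hepm : 0 < e ^ (p - 1) := Real.rpow_pos_of_pos he _
  have h1 : (s / e) ^ (p - 1) = s ^ (p - 1) / e ^ (p - 1) := Real.div_rpow hs.le he.le _
  have h2 : (s / e) ^ p = s ^ p / e ^ p := Real.div_rpow hs.le he.le _
  have h3 : e ^ (p - 1) * e = e ^ p := by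
    rw [Real.rpow_sub he, Real.rpow_one]
    field_simp
  rw [h1, h2, ← h3] at hb hbe
  have e1 : p * (s ^ (p - 1) / e ^ (p - 1)) * (e ^ (p - 1) * e) = p * s ^ (p - 1) * e := by
    field_simp
  have e2 : (1 + (p - 1) * (s ^ p / (e ^ (p - 1) * e))) * (e ^ (p - 1) * e)
      = e ^ (p - 1) * e + (p - 1) * s ^ p := by
    field_simp
  have hse : (s = e) ↔ (s / e = 1) := (div_eq_one_iff_eq he.ne').symm
  constructor
  · have h4 := mul_le_mul_of_nonneg_right hb (by positivity : (0:ℝ) ≤ e ^ (p - 1) * e)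
    rw [e1, e2] at h4
    rw [← h3]
    exact h4
  · rw [← h3, hse]
    constructor
    · intro heq
      apply hbe.mp
      apply mul_right_cancel₀ (b := e ^ (p - 1) * e) (by positivity)
      rw [e1, e2]
      exact heq
    · intro heq
      have h5 := hbe.mpr heq
      have h6 := congrArg (· * (e ^ (p - 1) * e)) h5
      rw [e1, e2] at h6
      exact h6

/-- The two-variable optimization from the proof of the Rellich inequality: maximizing
`A(σ,ε) = (σ^p/p^{p−1})[(γ−2)(k−γ) − σ^q/q + (2(p−1)/p)ε²(k−γ−ε²/2)]` over `σ, ε > 0`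
yields the sharp Rellich constant `E^p/p^p`, with equality iff `ε² = k−γ` and `σ^q = E`. -/
theorem rellich_optimization (p k γ : ℝ) (hp : 1 < p) (hγ₁ : 2 - (p - 1) * (k - 2) < γ)
    (hγ₂ : γ < k) (q E : ℝ) (hq : q = p / (p - 1))
    (hE : E = ((k - γ) / p) * (γ - 2 + (p - 1) * (k - 2)))
    (σ ε : ℝ) (hσ : 0 < σ) (hε : 0 < ε) :
    0 < E
    ∧ σ ^ p / p ^ (p - 1) *
        ((γ - 2) * (k - γ) - σ ^ q / q + 2 * (p - 1) / p * ε ^ 2 * (k - γ - ε ^ 2 / 2))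
      ≤ E ^ p / p ^ p
    ∧ (σ ^ p / p ^ (p - 1) *
          ((γ - 2) * (k - γ) - σ ^ q / q + 2 * (p - 1) / p * ε ^ 2 * (k - γ - ε ^ 2 / 2))
        = E ^ p / p ^ p
      ↔ ε ^ 2 = k - γ ∧ σ ^ q = E) := by
  have hp0 : (0:ℝ) < p - 1 := by linarith
  have hpp : (0:ℝ) < p := by linarith
  have hk : 0 < k - γ := by linarith
  have hE0 : 0 < E := by
    rw [hE]
    have : 0 < γ - 2 + (p - 1) * (k - 2) := by nlinarith
    positivity
  have hq0 : 0 < q := by rw [hq]; positivity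
  have hS : 0 < σ ^ q := Real.rpow_pos_of_pos hσ _
  have hX : 0 < σ ^ p := Real.rpow_pos_of_pos hσ _
  have hEp : 0 < E ^ p := Real.rpow_pos_of_pos hE0 _
  have hP1 : 0 < p ^ (p - 1) := Real.rpow_pos_of_pos hpp _
  have hXS : (σ ^ q) ^ (p - 1) = σ ^ p := by
    rw [← Real.rpow_mul hσ.le]
    congr 1
    rw [hq]; field_simp
  have hSp : (σ ^ q) ^ p = σ ^ p * σ ^ q := by
    have h : (σ ^ q) ^ p = (σ ^ q) ^ (p - 1) * (σ ^ q) ^ (1:ℝ) := by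
      rw [← Real.rpow_add hS]; congr 1; ring
    rw [h, hXS, Real.rpow_one]
  have hpPp : p ^ p = p ^ (p - 1) * p := by
    have h : p ^ p = p ^ (p - 1) * p ^ (1:ℝ) := by
      rw [← Real.rpow_add hpp]; congr 1; ring
    rw [h, Real.rpow_one]
  obtain ⟨hkey, hkeye⟩ := rellich_key p hp (σ ^ q) E hS hE0
  rw [hXS, hSp] at hkey hkeye
  have hqv2 : σ ^ p * (σ ^ q / q) * p = (p - 1) * (σ ^ p * σ ^ q) := by
    rw [hq]; field_simp
  have hB : (γ - 2) * (k - γ) - σ ^ q / q + 2 * (p - 1) / p * ε ^ 2 * (k - γ - ε ^ 2 / 2)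
      = E - σ ^ q / q - (p - 1) / p * (ε ^ 2 - (k - γ)) ^ 2 := by
    rw [hE]; field_simp; ring
  -- G ≤ E^p / p with equality iff σ^q = E
  have hG : σ ^ p * (E - σ ^ q / q) ≤ E ^ p / p := by
    rw [le_div_iff₀ hpp]
    linarith only [hkey, hqv2]
  have hGe : σ ^ p * (E - σ ^ q / q) = E ^ p / p ↔ σ ^ q = E := by
    rw [eq_div_iff hpp.ne']
    constructor
    · intro h
      apply hkeye.mp
      linear_combination h + hqv2
    · intro h
      have h2 := hkeye.mpr h
      linear_combination h2 - hqv2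
  have hRHS : E ^ p / p ^ p = (E ^ p / p) / p ^ (p - 1) := by
    rw [hpPp]; ring
  have hLHS : σ ^ p / p ^ (p - 1) * (E - σ ^ q / q - (p - 1) / p * (ε ^ 2 - (k - γ)) ^ 2)
      = σ ^ p * (E - σ ^ q / q) / p ^ (p - 1)
        - σ ^ p / p ^ (p - 1) * ((p - 1) / p * (ε ^ 2 - (k - γ)) ^ 2) := by ring
  have h2 : σ ^ p * (E - σ ^ q / q) / p ^ (p - 1) ≤ (E ^ p / p) / p ^ (p - 1) := by
    gcongr
  have h4 : 0 ≤ σ ^ p / p ^ (p - 1) * ((p - 1) / p * (ε ^ 2 - (k - γ)) ^ 2) := by positivity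
  refine ⟨hE0, ?_, ?_⟩
  · rw [hB, hRHS, hLHS]
    linarith
  · rw [hB, hRHS, hLHS]
    constructor
    · intro h
      have hD0 : σ ^ p / p ^ (p - 1) * ((p - 1) / p * (ε ^ 2 - (k - γ)) ^ 2) = 0 := by
        linarith
      have h5 : σ ^ p * (E - σ ^ q / q) / p ^ (p - 1) = (E ^ p / p) / p ^ (p - 1) := by
        linarith
      have h6 : σ ^ p * (E - σ ^ q / q) = E ^ p / p := by
        have h5' := congrArg (· * p ^ (p - 1)) h5
        rwa [div_mul_cancel₀ _ hP1.ne', div_mul_cancel₀ _ hP1.ne'] at h5'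
      refine ⟨?_, hGe.mp h6⟩
      have h7 : (ε ^ 2 - (k - γ)) ^ 2 = 0 := by
        by_contra hne
        have hpos : 0 < (ε ^ 2 - (k - γ)) ^ 2 := lt_of_le_of_ne (sq_nonneg _) (Ne.symm hne)
        have : 0 < σ ^ p / p ^ (p - 1) * ((p - 1) / p * (ε ^ 2 - (k - γ)) ^ 2) := by
          positivity
        linarith
      have := pow_eq_zero_iff (n := 2) (by norm_num) |>.mp h7
      linarith
    · rintro ⟨h1, h2'⟩
      have h6 := hGe.mpr h2'
      rw [h1, sub_self]
      rw [h6]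
      ring
end
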